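/- Let h, k, c be natural numbers with c ≥ 1, 1 ≤ k ≤ 2^h, and suppose k = 2^{ν(k)} is a power of 2 (i.e., σ(k) = 1); set u = k. Then ν(S(c·2^h + u, k)) = 0. -/
import Mathlib

/-- Stirling numbers of the second kind. -/
def stirling2 : ℕ → ℕ → ℕ
  | 0, 0 => 1
  | 0, _ + 1 => 0
  | _ + 1, 0 => 0
  | n + 1, k + 1 => (k + 1) * stirling2 n (k + 1) + stirling2 n k

/-- Sum of base-2 digits. -/
def sigma2 (n : ℕ) : ℕ := (Nat.digits 2 n).sum

/-- The set of powers of 2 appearing in the binary expansion of `n`. -/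
def twoPows (n : ℕ) : Finset ℕ := (Nat.bitIndices n).toFinset.image (2 ^ ·)

lemma stirling2_zero (n : ℕ) (hn : 1 ≤ n) : stirling2 n 0 = 0 := by
  match n, hn with
  | n + 1, _ => rfl

lemma stirling2_eq_zero_of_lt : ∀ n k, n < k → stirling2 n k = 0 := by
  intro n
  induction n with
  | zero => intro k hk; match k, hk with | k + 1, _ => rfl
  | succ n ih =>
    intro k hk
    match k, hk with
    | k + 1, hk =>
      show (k + 1) * stirling2 n (k + 1) + stirling2 n k = 0
      rw [ih (k + 1) (by omega), ih k (by omega)]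
      ring

lemma stirling2_self : ∀ n, stirling2 n n = 1 := by
  intro n
  induction n with
  | zero => rfl
  | succ n ih =>
    show (n + 1) * stirling2 n (n + 1) + stirling2 n n = 1
    rw [ih, stirling2_eq_zero_of_lt n (n + 1) (by omega)]
    ring

lemma stirling2_mod_two : ∀ n k d, 1 ≤ k → n = k + d →
    stirling2 n k % 2 = Nat.choose (d + ((k + 1) / 2 - 1)) ((k + 1) / 2 - 1) % 2 := by
  intro n
  induction n with
  | zero => intro k d hk hn; omega
  | succ n ih =>
    intro k d hk hn
    match k, hk with
    | j + 1, _ =>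
      match d with
      | 0 =>
        have h1 : n + 1 = j + 1 := by omega
        rw [h1, stirling2_self, Nat.zero_add, Nat.choose_self]
      | e + 1 =>
        have hs : stirling2 (n + 1) (j + 1)
            = (j + 1) * stirling2 n (j + 1) + stirling2 n j := rfl
        match j with
        | 0 =>
          have h0 : stirling2 n 0 = 0 := stirling2_zero n (by omega)
          have h1 := ih 1 e (by omega) (by omega)
          simp only [hs, h0, Nat.add_zero, one_mul]
          simpa using h1
        | i + 1 =>
          rw [hs]
          have hmul := Nat.mul_mod (i + 1 + 1) (stirling2 n (i + 1 + 1)) 2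
          rcases Nat.even_or_odd (i + 2) with ⟨m, hm⟩ | ⟨m, hm⟩
          · -- k = i + 2 = 2m even
            have hm1 : 1 ≤ m := by omega
            have heven : (i + 1 + 1) % 2 = 0 := by omega
            rw [heven, Nat.zero_mul] at hmul
            have h1 := ih (i + 1) (e + 1) (by omega) (by omega)
            have e1 : e + 1 + ((i + 1 + 1) / 2 - 1) = e + 1 + ((i + 1 + 1 + 1) / 2 - 1) := by
              omega
            have e2 : (i + 1 + 1) / 2 - 1 = (i + 1 + 1 + 1) / 2 - 1 := by omega
            rw [e1, e2] at h1
            omega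
          · -- k = i + 2 = 2m + 1 odd
            have hm1 : 1 ≤ m := by omega
            obtain ⟨m', rfl⟩ : ∃ m', m = m' + 1 := ⟨m - 1, by omega⟩
            have hodd : (i + 1 + 1) % 2 = 1 := by omega
            rw [hodd, Nat.one_mul] at hmul
            have h1 := ih (i + 1 + 1) e (by omega) (by omega)
            have h2 := ih (i + 1) (e + 1) (by omega) (by omega)
            have e1 : (i + 1 + 1 + 1) / 2 - 1 = m' + 1 := by omega
            have e2 : (i + 1 + 1) / 2 - 1 = m' := by omega
            rw [e1] at h1
            rw [e2] at h2
            have e3 : e + 1 + ((i + 1 + 1 + 1) / 2 - 1) = (e + (m' + 1)) + 1 := by omega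
            rw [e3, e1, Nat.choose_succ_succ]
            simp only [Nat.succ_eq_add_one]
            have e5 : e + 1 + m' = e + (m' + 1) := by omega
            rw [e5] at h2
            omega

lemma odd_choose : ∀ h m r, r < 2 ^ h → Nat.choose (m * 2 ^ h + r) r % 2 = 1 := by
  intro h
  induction h with
  | zero =>
    intro m r hr
    interval_cases r
    simp
  | succ h ih =>
    intro m r hr
    have step := Choose.choose_modEq_choose_mod_mul_choose_div_nat
      (p := 2) (n := m * 2 ^ (h + 1) + r) (k := r)
    have hq : 2 ^ (h + 1) = 2 * 2 ^ h := by ring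
    have hmod : (m * 2 ^ (h + 1) + r) % 2 = r % 2 := by
      rw [hq, ← Nat.mul_assoc, Nat.mul_comm m 2, Nat.mul_assoc]
      exact Nat.mul_add_mod 2 (m * 2 ^ h) r
    have hdiv : (m * 2 ^ (h + 1) + r) / 2 = m * 2 ^ h + r / 2 := by
      rw [hq, ← Nat.mul_assoc, Nat.mul_comm m 2, Nat.mul_assoc]
      exact Nat.mul_add_div (by norm_num) (m * 2 ^ h) r
    unfold Nat.ModEq at step
    rw [hmod, hdiv, Nat.choose_self] at step
    rw [step, Nat.one_mul]
    exact ih m (r / 2) (by omega)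

theorem stmt_17 (h k c : ℕ) (hc : 1 ≤ c) (hk : 1 ≤ k) (hk2 : k ≤ 2 ^ h)
    (hpow : k = 2 ^ padicValNat 2 k) :
    padicValNat 2 (stirling2 (c * 2 ^ h + k) k) = 0 := by
  set j := padicValNat 2 k with hj
  have key := stirling2_mod_two (c * 2 ^ h + k) k (c * 2 ^ h) hk (by ring)
  have hr : (k + 1) / 2 - 1 < 2 ^ h := by
    match j, hpow with
    | 0, hpow => simp only [pow_zero] at hpow; subst hpow; simpa using Nat.pos_pow_of_pos h (by norm_num)
    | j + 1, hpow =>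
      have h2 : 2 ^ (j + 1) = 2 * 2 ^ j := by ring
      have hlt : (k + 1) / 2 - 1 < 2 ^ (j + 1) := by
        rw [hpow, h2]; omega
      omega
  have hchoose := odd_choose h c ((k + 1) / 2 - 1) hr
  have hodd : stirling2 (c * 2 ^ h + k) k % 2 = 1 := by rw [key, hchoose]
  apply padicValNat.eq_zero_of_not_dvd
  omega
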